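/- Assume the direct-system setup with the interleaving hypothesis (H) and properties (S) and (K), and assume in addition that G^k_∞ is isomorphic to ℤ (as an abelian group) for every k ∈ ℕ. Then F_∞ is isomorphic to ℤ. -/
import Mathlib

theorem aux_interleave
    (F : ℕ → Type) [∀ n, AddCommGroup (F n)]
    (Finf : Type) [AddCommGroup Finf]
    (i2 : ∀ n m : ℕ, n ≤ m → (F n →+ F m))
    (i : ∀ n, F n →+ Finf)
    (hFid : ∀ (n : ℕ) (x : F n), i2 n n le_rfl x = x)
    (hFcomp : ∀ (n m l : ℕ) (h1 : n ≤ m) (h2 : m ≤ l) (x : F n),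
      i2 m l h2 (i2 n m h1 x) = i2 n l (h1.trans h2) x)
    (hicompat : ∀ (n m : ℕ) (h : n ≤ m) (x : F n), i m (i2 n m h x) = i n x)
    (Gk : ℕ → Type) [∀ n, AddCommGroup (Gk n)]
    (Ginfk : Type) [AddCommGroup Ginfk]
    (j2 : ∀ (n m : ℕ), n ≤ m → (Gk n →+ Gk m))
    (j : ∀ n, Gk n →+ Ginfk)
    (hjcompat : ∀ (n m : ℕ) (h : n ≤ m) (y : Gk n), j m (j2 n m h y) = j n y)
    (hS : ∀ n, Function.Surjective (j n))
    (hK : ∀ (n : ℕ) (y : Gk n), j n y = 0 → j2 n (n+1) (Nat.le_succ n) y = 0)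
    (ψ : Ginfk ≃+ ℤ)
    (n₀ : ℕ) (hn₀ : 4 ≤ n₀)
    (a : ∀ n, F n →+ Gk (n+1)) (b : ∀ n, Gk n →+ F (n+1))
    (ha : ∀ n, n + 1 ≤ n₀ → ∀ x : F n,
        a (n+1) (i2 n (n+1) (by omega) x) = j2 (n+1) (n+2) (by omega) (a n x))
    (hb : ∀ n, n + 1 ≤ n₀ → ∀ y : Gk n,
        b (n+1) (j2 n (n+1) (by omega) y) = i2 (n+1) (n+2) (by omega) (b n y))
    (hba : ∀ n, n + 1 ≤ n₀ → ∀ x : F n, b (n+1) (a n x) = i2 n (n+2) (by omega) x)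
    (hab : ∀ n, n + 1 ≤ n₀ → ∀ y : Gk n, a (n+1) (b n y) = j2 n (n+2) (by omega) y)
    : ∃ x₁ : F 1,
      (∀ x : F 1, i2 1 n₀ (by omega) x = 0 → i2 1 4 (by omega) x = 0) ∧
      (∀ m, 1 ≤ m → m + 3 ≤ n₀ → ∀ x : F m, ∃ c : ℤ, i m x = c • i 1 x₁) ∧
      (∀ c : ℤ, c • i2 1 4 (by omega) x₁ = 0 → c = 0) := by
  classical
  -- the section φ
  let φ : ∀ m : ℕ, Ginfk → Gk (m+1) := fun m z => j2 m (m+1) (Nat.le_succ m) ((hS m z).choose)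
  have hφwd : ∀ (m : ℕ) (z : Ginfk) (y : Gk m), j m y = z →
      φ m z = j2 m (m+1) (Nat.le_succ m) y := by
    intro m z y hy
    show j2 m (m+1) (Nat.le_succ m) ((hS m z).choose) = j2 m (m+1) (Nat.le_succ m) y
    have h1 : j m ((hS m z).choose - y) = 0 := by
      rw [map_sub, (hS m z).choose_spec, hy, sub_self]
    have h2 := hK m _ h1
    rw [map_sub, sub_eq_zero] at h2
    exact h2
  have hφj : ∀ (m : ℕ) (z : Ginfk), j (m+1) (φ m z) = z := by
    intro m z
    show j (m+1) (j2 m (m+1) (Nat.le_succ m) ((hS m z).choose)) = z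
    rw [hjcompat, (hS m z).choose_spec]
  have hφcompat : ∀ (m : ℕ) (z : Ginfk), j2 (m+1) (m+2) (by omega) (φ m z) = φ (m+1) z :=
    fun m z => (hφwd (m+1) z (φ m z) (hφj m z)).symm
  have hφsmul : ∀ (m : ℕ) (c : ℤ) (z : Ginfk), φ m (c • z) = c • φ m z := by
    intro m c z
    have h1 : j m (c • (hS m z).choose) = c • z := by rw [map_zsmul, (hS m z).choose_spec]
    rw [hφwd m (c • z) _ h1, map_zsmul]
  have hφ0 : ∀ m : ℕ, φ m 0 = 0 := by
    intro m
    rw [hφwd m 0 0 (map_zero (j m)), map_zero]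
  -- f and g
  let f : ∀ n : ℕ, F n → Ginfk := fun n x => j (n+1) (a n x)
  let g : ∀ n : ℕ, Ginfk → F (n+3) := fun n z => b (n+2) (φ (n+1) z)
  have hgsmul : ∀ (n : ℕ) (c : ℤ) (z : Ginfk), g n (c • z) = c • g n z := by
    intro n c z
    show b (n+2) (φ (n+1) (c • z)) = c • b (n+2) (φ (n+1) z)
    rw [hφsmul, map_zsmul]
  -- f compatible with the system maps
  have hstep : ∀ m, m + 1 ≤ n₀ → ∀ y : F m, f (m+1) (i2 m (m+1) (by omega) y) = f m y := by
    intro m hm y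
    show j (m+2) (a (m+1) (i2 m (m+1) (by omega) y)) = j (m+1) (a m y)
    rw [ha m hm y, hjcompat]
  have hL1 : ∀ n m (h : n ≤ m), m ≤ n₀ → ∀ x : F n, f m (i2 n m h x) = f n x := by
    intro n m h
    induction m, h using Nat.le_induction with
    | base => exact fun _ x => congrArg (f n) (hFid n x)
    | succ m hnm ih =>
      intro hm x
      have h1 : i2 n (m+1) (by omega) x = i2 m (m+1) (by omega) (i2 n m hnm x) :=
        (hFcomp n m (m+1) hnm (by omega) x).symm
      rw [h1, hstep m hm, ih (by omega)]
  -- factorization i2 n (n+3) = g ∘ f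
  have hL2 : ∀ n, n + 2 ≤ n₀ → ∀ x : F n, i2 n (n+3) (by omega) x = g n (f n x) := by
    intro n hn x
    show i2 n (n+3) (by omega) x = b (n+2) (φ (n+1) (j (n+1) (a n x)))
    rw [hφwd (n+1) _ (a n x) rfl]
    rw [← ha n (by omega) x]
    rw [hba (n+1) hn]
    exact (hFcomp n (n+1) (n+3) (by omega) (by omega) x).symm
  have hL24 : ∀ x : F 1, i2 1 4 (by omega) x = g 1 (f 1 x) := fun x => hL2 1 (by omega) x
  -- g compatible
  have hL4 : ∀ n, n + 3 ≤ n₀ → ∀ z : Ginfk,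
      i2 (n+3) (n+4) (by omega) (g n z) = g (n+1) z := by
    intro n hn z
    show i2 (n+3) (n+4) (by omega) (b (n+2) (φ (n+1) z)) = b (n+3) (φ (n+2) z)
    have hbr : b (n+3) (j2 (n+2) (n+3) (by omega) (φ (n+1) z))
        = i2 (n+3) (n+4) (by omega) (b (n+2) (φ (n+1) z)) := hb (n+2) hn (φ (n+1) z)
    rw [← hbr]
    have hpc : j2 (n+2) (n+3) (by omega) (φ (n+1) z) = φ (n+2) z := hφcompat (n+1) z
    rw [hpc]
  -- f 4 ∘ g 1 = id
  have hL5 : ∀ z : Ginfk, j 5 (a 4 (g 1 z)) = z := by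
    intro z
    show j 5 (a 4 (b 3 (φ 2 z))) = z
    have h1 : a 4 (b 3 (φ 2 z)) = j2 3 5 (by omega) (φ 2 z) := hab 3 (by omega) _
    have h2 : j 5 (j2 3 5 (by omega) (φ 2 z)) = j 3 (φ 2 z) := hjcompat 3 5 (by omega) _
    rw [h1, h2]
    exact hφj 2 z
  -- the special element x₁
  let w : Ginfk := ψ.symm 1
  have hψw : ψ w = 1 := ψ.apply_symm_apply 1
  let x₁ : F 1 := b 0 ((hS 0 w).choose)
  have hfx₁ : f 1 x₁ = w := by
    show j 2 (a 1 (b 0 ((hS 0 w).choose))) = w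
    have h1 : a 1 (b 0 ((hS 0 w).choose)) = j2 0 2 (by omega) ((hS 0 w).choose) :=
      hab 0 (by omega) _
    have h2 : j 2 (j2 0 2 (by omega) ((hS 0 w).choose)) = j 0 ((hS 0 w).choose) :=
      hjcompat 0 2 (by omega) _
    rw [h1, h2, (hS 0 w).choose_spec]
  have he1 : i 4 (g 1 w) = i 1 x₁ := by
    rw [← hfx₁, ← hL24 x₁]
    exact hicompat 1 4 (by omega) x₁
  -- chain
  have hchain : ∀ t, 1 ≤ t → t + 3 ≤ n₀ → i (t+3) (g t w) = i 4 (g 1 w) := by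
    intro t ht
    induction t, ht using Nat.le_induction with
    | base => exact fun _ => rfl
    | succ t ht ih =>
      intro h
      have h1 : t + 3 ≤ n₀ := by omega
      show i (t+4) (g (t+1) w) = i 4 (g 1 w)
      rw [← hL4 t h1 w, hicompat, ih h1]
  refine ⟨x₁, ?_, ?_, ?_⟩
  · -- P1
    intro x hx
    have hf0 : f 1 x = 0 := by
      have h1 := hL1 1 n₀ (by omega) le_rfl x
      rw [hx] at h1
      rw [← h1]
      show j (n₀+1) (a n₀ 0) = 0
      rw [map_zero, map_zero]
    rw [hL24 x, hf0]
    show b 3 (φ 2 (0 : Ginfk)) = 0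
    rw [hφ0, map_zero]
  · -- P2
    intro m hm1 hm3 x
    refine ⟨ψ (f m x), ?_⟩
    have hfx : f m x = (ψ (f m x)) • w := by
      apply ψ.injective
      rw [map_zsmul, hψw, smul_eq_mul, mul_one]
    calc i m x = i (m+3) (i2 m (m+3) (by omega) x) := (hicompat m (m+3) (by omega) x).symm
      _ = i (m+3) (g m (f m x)) := by rw [hL2 m (by omega) x]
      _ = i (m+3) (g m ((ψ (f m x)) • w)) := by rw [← hfx]
      _ = (ψ (f m x)) • i (m+3) (g m w) := by rw [hgsmul, map_zsmul]
      _ = (ψ (f m x)) • i 4 (g 1 w) := by rw [hchain m hm1 hm3]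
      _ = (ψ (f m x)) • i 1 x₁ := by rw [he1]
  · -- P3
    intro c hc
    rw [hL24 x₁, hfx₁] at hc
    have h5 : j 5 (a 4 (c • g 1 w)) = 0 := by rw [hc, map_zero, map_zero]
    have h6 : j 5 (a 4 (c • g 1 w)) = c • w := by
      rw [map_zsmul, map_zsmul, hL5 w]
    rw [h6] at h5
    have h7 : ψ (c • w) = 0 := by rw [h5, map_zero]
    rw [map_zsmul, hψw, smul_eq_mul, mul_one] at h7
    exact h7



/-- Under the direct-system setup with (H), (S), (K), if each `G^k_∞` is isomorphic
to `ℤ` then `F_∞` is isomorphic to `ℤ`. -/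
theorem finf_iso_int
    (F : ℕ → Type) [∀ n, AddCommGroup (F n)]
    (Finf : Type) [AddCommGroup Finf]
    (i2 : ∀ n m : ℕ, n ≤ m → (F n →+ F m))
    (i : ∀ n, F n →+ Finf)
    (hFid : ∀ (n : ℕ) (x : F n), i2 n n le_rfl x = x)
    (hFcomp : ∀ (n m l : ℕ) (h1 : n ≤ m) (h2 : m ≤ l) (x : F n),
      i2 m l h2 (i2 n m h1 x) = i2 n l (h1.trans h2) x)
    (hicompat : ∀ (n m : ℕ) (h : n ≤ m) (x : F n), i m (i2 n m h x) = i n x)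
    (hiexh : ∀ z : Finf, ∃ (n : ℕ) (x : F n), i n x = z)
    (hiker : ∀ (n : ℕ) (x : F n), i n x = 0 → ∃ (m : ℕ) (h : n ≤ m), i2 n m h x = 0)
    (G : ℕ → ℕ → Type) [∀ k n, AddCommGroup (G k n)]
    (Ginf : ℕ → Type) [∀ k, AddCommGroup (Ginf k)]
    (j2 : ∀ (k n m : ℕ), n ≤ m → (G k n →+ G k m))
    (j : ∀ k n, G k n →+ Ginf k)
    (hGid : ∀ (k n : ℕ) (y : G k n), j2 k n n le_rfl y = y)
    (hGcomp : ∀ (k n m l : ℕ) (h1 : n ≤ m) (h2 : m ≤ l) (y : G k n),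
      j2 k m l h2 (j2 k n m h1 y) = j2 k n l (h1.trans h2) y)
    (hjcompat : ∀ (k n m : ℕ) (h : n ≤ m) (y : G k n), j k m (j2 k n m h y) = j k n y)
    (hjexh : ∀ (k : ℕ) (z : Ginf k), ∃ (n : ℕ) (y : G k n), j k n y = z)
    (hjker : ∀ (k n : ℕ) (y : G k n), j k n y = 0 → ∃ (m : ℕ) (h : n ≤ m), j2 k n m h y = 0)
    (hH : ∀ n₀ : ℕ, ∃ (k : ℕ) (a : ∀ n, F n →+ G k (n+1)) (b : ∀ n, G k n →+ F (n+1)),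
      (∀ n, n + 1 ≤ n₀ → ∀ x : F n,
        a (n+1) (i2 n (n+1) (by omega) x) = j2 k (n+1) (n+2) (by omega) (a n x)) ∧
      (∀ n, n + 1 ≤ n₀ → ∀ y : G k n,
        b (n+1) (j2 k n (n+1) (by omega) y) = i2 (n+1) (n+2) (by omega) (b n y)) ∧
      (∀ n, n + 1 ≤ n₀ → ∀ x : F n, b (n+1) (a n x) = i2 n (n+2) (by omega) x) ∧
      (∀ n, n + 1 ≤ n₀ → ∀ y : G k n, a (n+1) (b n y) = j2 k n (n+2) (by omega) y))
    (hS : ∀ k n, Function.Surjective (j k n))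
    (hK : ∀ (k n : ℕ) (y : G k n), j k n y = 0 → j2 k n (n+1) (by omega) y = 0)
    (hZ : ∀ k, Nonempty (Ginf k ≃+ ℤ))
    : Nonempty (Finf ≃+ ℤ) := by
  classical
  obtain ⟨kA, aA, bA, haA, hbA, hbaA, habA⟩ := hH 4
  obtain ⟨ψA⟩ := hZ kA
  obtain ⟨x₁, _, hP2A, hP3A⟩ := aux_interleave F Finf i2 i hFid hFcomp hicompat
    (G kA) (Ginf kA) (j2 kA) (j kA) (hjcompat kA) (hS kA) (hK kA) ψA 4 le_rfl
    aA bA haA hbA hbaA habA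
  set e : Finf := i 1 x₁ with he
  -- kernel stabilization
  have hstab : ∀ x : F 1, (∃ (L : ℕ) (h : 1 ≤ L), i2 1 L h x = 0) →
      i2 1 4 (by omega) x = 0 := by
    rintro x ⟨L, hL, hx⟩
    obtain ⟨kB, aB, bB, haB, hbB, hbaB, habB⟩ := hH (max L 4)
    obtain ⟨ψB⟩ := hZ kB
    obtain ⟨x₁', hP1B, -, -⟩ := aux_interleave F Finf i2 i hFid hFcomp hicompat
      (G kB) (Ginf kB) (j2 kB) (j kB) (hjcompat kB) (hS kB) (hK kB) ψB (max L 4)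
      (le_max_right _ _) aB bB haB hbB hbaB habB
    apply hP1B
    have h1 : i2 L (max L 4) (le_max_left _ _) (i2 1 L hL x)
        = i2 1 (max L 4) (by omega) x := hFcomp 1 L (max L 4) hL (le_max_left _ _) x
    rw [← h1, hx, map_zero]
  -- injectivity
  have hinj : ∀ c : ℤ, c • e = 0 → c = 0 := by
    intro c hc
    have h1 : i 1 (c • x₁) = 0 := by rw [map_zsmul, ← he, hc]
    obtain ⟨L, hL, hx⟩ := hiker 1 _ h1
    have h2 := hstab (c • x₁) ⟨L, hL, hx⟩
    rw [map_zsmul] at h2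
    exact hP3A c h2
  -- surjectivity
  have hsurj : ∀ z : Finf, ∃ c : ℤ, c • e = z := by
    intro z
    obtain ⟨n₁, x, hx⟩ := hiexh z
    obtain ⟨kB, aB, bB, haB, hbB, hbaB, habB⟩ := hH (n₁ + 4)
    obtain ⟨ψB⟩ := hZ kB
    obtain ⟨x₁', -, hP2B, -⟩ := aux_interleave F Finf i2 i hFid hFcomp hicompat
      (G kB) (Ginf kB) (j2 kB) (j kB) (hjcompat kB) (hS kB) (hK kB) ψB (n₁ + 4)
      (by omega) aB bB haB hbB hbaB habB
    obtain ⟨c, hc⟩ := hP2B (n₁ + 1) (by omega) (by omega) (i2 n₁ (n₁+1) (by omega) x)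
    obtain ⟨c₁, hc₁⟩ := hP2A 1 le_rfl (by omega) x₁'
    refine ⟨c * c₁, ?_⟩
    rw [hicompat n₁ (n₁+1) (by omega) x, hx] at hc
    rw [mul_smul, ← hc₁, ← hc]
  -- conclude
  let h : ℤ →+ Finf := AddMonoidHom.mk' (fun c => c • e) (fun c d => add_zsmul e c d)
  have hbij : Function.Bijective h := by
    constructor
    · intro c₁ c₂ hcc
      have hcc' : c₁ • e = c₂ • e := hcc
      have h1 : (c₁ - c₂) • e = 0 := by
        rw [sub_zsmul, hcc']
        abel
      have := hinj _ h1
      omega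
    · intro z
      obtain ⟨c, hc⟩ := hsurj z
      exact ⟨c, hc⟩
  exact ⟨(AddEquiv.ofBijective h hbij).symm⟩
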